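/- Let N be a stable 3-pair network such that for all pairwise distinct i, j, l ∈ {1,2,3}, either m_{i,j}^i = {l} or m_{i,l}^i = {j}. If m_{i,j}^i = {l} for some pairwise distinct i, j, l, then l ∈ m_{i,j}^i, j ∈ m_{i,l}^l, and i ∈ m_{j,l}^j. -/

import Mathlib

open scoped BigOperators

/-- A `k`-pair network: a finite DAG with `k` sources of in-degree 0 and
`k` sinks of out-degree 0. -/
structure KPairNetwork (k : ℕ) where
  V : Type
  A : Type
  [fintypeV : Fintype V]
  [fintypeA : Fintype A]
  [decEqV : DecidableEq V]
  [decEqA : DecidableEq A]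
  tail : A → V
  head : A → V
  /-- acyclicity, via a topological ordering of the vertices -/
  acyclic : ∃ ord : V → ℕ, ∀ a : A, ord (tail a) < ord (head a)
  src : Fin k → V
  snk : Fin k → V
  src_inj : Function.Injective src
  snk_inj : Function.Injective snk
  src_no_in : ∀ (i : Fin k) (a : A), head a ≠ src i
  snk_no_out : ∀ (i : Fin k) (a : A), tail a ≠ snk i

attribute [instance] KPairNetwork.fintypeV KPairNetwork.fintypeA
attribute [instance] KPairNetwork.decEqV KPairNetwork.decEqA

namespace KPairNetwork

variable {k : ℕ} (N : KPairNetwork k)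

/-- `l` is (the list of arcs of) a directed path from `u` to `v`. -/
def IsPathFrom (u v : N.V) (l : List N.A) : Prop :=
  l ≠ [] ∧ l.Chain' (fun a b => N.head a = N.tail b) ∧
    (∀ a ∈ l.head?, N.tail a = u) ∧ (∀ a ∈ l.getLast?, N.head a = v)

/-- The vertices lying on a (nonempty) list of arcs. -/
def pathVerts (l : List N.A) : Set N.V :=
  {v | ∃ a ∈ l, v = N.tail a ∨ v = N.head a}

/-- `P i j` is a path from `s i` to `t j`, and for each sink `j` the `k`
paths `P · j` are pairwise arc-disjoint (strong reachability). -/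
def IsStrongSystem (P : Fin k → Fin k → List N.A) : Prop :=
  (∀ i j, N.IsPathFrom (N.src i) (N.snk j) (P i j)) ∧
    ∀ (j i i' : Fin k), i ≠ i' → ∀ a : N.A, a ∈ P i j → a ∉ P i' j

/-- Extra strong reachability: in addition, for each sink `j`, two distinct
paths towards `t j` share no vertex other than `t j`. -/
def IsExtraStrongSystem (P : Fin k → Fin k → List N.A) : Prop :=
  N.IsStrongSystem P ∧
    ∀ (j i i' : Fin k), i ≠ i' →
      ∀ v : N.V, v ∈ N.pathVerts (P i j) → v ∈ N.pathVerts (P i' j) → v = N.snk j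

/-- Stability: the choice of the `k` pairwise arc-disjoint paths towards each
sink is unique. -/
def IsStableSystem (P : Fin k → Fin k → List N.A) : Prop :=
  N.IsStrongSystem P ∧
    ∀ (j : Fin k) (Q : Fin k → List N.A),
      (∀ i, N.IsPathFrom (N.src i) (N.snk j) (Q i)) →
      (∀ i i', i ≠ i' → ∀ a : N.A, a ∈ Q i → a ∉ Q i') →
      ∀ i, Q i = P i j

/-- `excess_f(v) = Σ_{head a = v} f a − Σ_{tail a = v} f a`. -/
noncomputable def excess (f : N.A → ℝ) (v : N.V) : ℝ :=
  (∑ a : N.A, if N.head a = v then f a else 0) -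
    (∑ a : N.A, if N.tail a = v then f a else 0)

/-- An `u`–`v` flow: zero excess away from `u` and `v`. -/
def IsFlow (u v : N.V) (f : N.A → ℝ) : Prop :=
  ∀ w : N.V, w ≠ u → w ≠ v → N.excess f w = 0

/-- The unit flow along a path: `1` on its arcs and `0` elsewhere. -/
noncomputable def unitFlow (l : List N.A) : N.A → ℝ :=
  fun a => if a ∈ l then 1 else 0

/-- The set of source/sink index pairs whose path passes through the arc `a`. -/
def arcPattern (P : Fin k → Fin k → List N.A) (a : N.A) : Finset (Fin k × Fin k) :=
  Finset.univ.filter (fun q => a ∈ P q.1 q.2)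

/-- `S_N`, the family of index-pair patterns of the arcs of `N`. -/
def SN (P : Fin k → Fin k → List N.A) : Set (Finset (Fin k × Fin k)) :=
  {T | ∃ a : N.A, T = N.arcPattern P a}

/-! ### Segments and longest common segments -/

/-- A segment: a start vertex together with a (possibly empty) chained list of
arcs starting there.  A segment with no arcs is a single vertex. -/
def IsSeg (s : N.V × List N.A) : Prop :=
  s.2.Chain' (fun a b => N.head a = N.tail b) ∧ ∀ a ∈ s.2.head?, N.tail a = s.1

/-- The vertices of a segment. -/
def segVerts (s : N.V × List N.A) : Set N.V :=
  insert s.1 (N.pathVerts s.2)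

/-- The final vertex of a segment. -/
def segEnd (s : N.V × List N.A) : N.V :=
  s.2.getLast?.elim s.1 N.head

/-- The segment `s` lies on the path `p`. -/
def SegOn (s : N.V × List N.A) (p : List N.A) : Prop :=
  s.2 <:+: p ∧ s.1 ∈ N.pathVerts p

/-- The segment `s` is contained in the segment `s'`. -/
def SegLE (s s' : N.V × List N.A) : Prop :=
  s.2 <:+: s'.2 ∧ s.1 ∈ N.segVerts s'

/-- `s` is a longest common segment (l.c.s.) of the set of paths `ps`:
it is a segment common to all paths of `ps`, and no segment properly
containing it is common to all paths of `ps`. -/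
def IsLCS (ps : Set (List N.A)) (s : N.V × List N.A) : Prop :=
  N.IsSeg s ∧ (∀ p ∈ ps, N.SegOn s p) ∧
    ∀ s' : N.V × List N.A, N.IsSeg s' → N.SegLE s s' → s' ≠ s →
      ∃ p ∈ ps, ¬ N.SegOn s' p

/-- `s` is an l.c.s. of some pair `{P i j₁, P i' j₂}` and lies on `p`. -/
def IsPairLCSOn (P : Fin k → Fin k → List N.A) (j₁ j₂ : Fin k)
    (p : List N.A) (s : N.V × List N.A) : Prop :=
  (∃ i i' : Fin k, N.IsLCS {P i j₁, P i' j₂} s) ∧ N.SegOn s p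

/-- `ℓ^{j₁,j₂}(p)`: the number of l.c.s.'s of pairs `{P i j₁, P i' j₂}` lying
on the path `p`. -/
noncomputable def lcsCount (P : Fin k → Fin k → List N.A) (j₁ j₂ : Fin k)
    (p : List N.A) : ℕ :=
  Nat.card {s : N.V × List N.A | N.IsPairLCSOn P j₁ j₂ p s}

/-- `m_{j₁,j₂}^c = {i : ℓ^{j₁,j₂}(P_{s_i,t_c}) = 1}`. -/
def mset (P : Fin k → Fin k → List N.A) (j₁ j₂ c : Fin k) : Set (Fin k) :=
  {i | N.lcsCount P j₁ j₂ (P i c) = 1}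

/-- `u` lies strictly before `v` along the path `p` (there is a nonempty
infix of `p` going from `u` to `v`). -/
def StrictlyBeforeOn (p : List N.A) (u v : N.V) : Prop :=
  ∃ l : List N.A, l <:+: p ∧ l.head?.map N.tail = some u ∧ l.getLast?.map N.head = some v

/-- `e 0, …, e (L-1)` enumerates, in the order along `p`, the l.c.s.'s
`p(1) < p(2) < ⋯ < p(L)` of pairs `{P i j₁, P i' j₂}` lying on `p`. -/
def IsLCSEnum (P : Fin k → Fin k → List N.A) (j₁ j₂ : Fin k) (p : List N.A)
    (e : ℕ → N.V × List N.A) (L : ℕ) : Prop :=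
  (∀ n, n < L → N.IsPairLCSOn P j₁ j₂ p (e n)) ∧
  (∀ s, N.IsPairLCSOn P j₁ j₂ p s → ∃ n, n < L ∧ e n = s) ∧
  (∀ m n, m < n → n < L → N.StrictlyBeforeOn p (N.segEnd (e m)) (e n).1)

/-! ### Residual networks, regular cycles, semi-cycles and crossings -/

/-- `a` is a `P_{t_j}`-arc. -/
def isPArc (P : Fin k → Fin k → List N.A) (j : Fin k) (a : N.A) : Prop :=
  ∃ i, a ∈ P i j

/-- The tail of `a` in the `j`-th residual network `N_j` (in which all
`P_{t_j}`-arcs are reversed). -/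
def rtail (P : Fin k → Fin k → List N.A) (j : Fin k) (a : N.A) : N.V :=
  if ∃ i, a ∈ P i j then N.head a else N.tail a

/-- The head of `a` in the `j`-th residual network `N_j`. -/
def rhead (P : Fin k → Fin k → List N.A) (j : Fin k) (a : N.A) : N.V :=
  if ∃ i, a ∈ P i j then N.tail a else N.head a

/-- `l` is a directed cycle of the residual network `N_j`. -/
def IsResidCycle (P : Fin k → Fin k → List N.A) (j : Fin k) (l : List N.A) : Prop :=
  l ≠ [] ∧ l.Nodup ∧
  l.Chain' (fun a b => N.rhead P j a = N.rtail P j b) ∧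
  (∀ a ∈ l.getLast?, ∀ b ∈ l.head?, N.rhead P j a = N.rtail P j b) ∧
  (l.map (N.rtail P j)).Nodup

/-- A regular cycle of `N_j`: a directed cycle of `N_j` having no isolated
vertex of `P_{t_j}`, i.e. every vertex of the cycle lying on a path of
`P_{t_j}` is incident in the cycle to some (reversed) `P_{t_j}`-arc. -/
def IsRegularCycle (P : Fin k → Fin k → List N.A) (j : Fin k) (l : List N.A) : Prop :=
  N.IsResidCycle P j l ∧
    ∀ v ∈ l.map (N.rtail P j),
      (∃ i, v ∈ N.pathVerts (P i j)) →
      ∃ a ∈ l, N.isPArc P j a ∧ (v = N.tail a ∨ v = N.head a)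

/-- A `P_{t_j}`-semi-cycle of `N`: the arc set of a regular cycle of `N_j`,
with the original orientations of `N` restored. -/
def IsSemiCycle (P : Fin k → Fin k → List N.A) (j : Fin k) (E : Set N.A) : Prop :=
  ∃ l : List N.A, N.IsRegularCycle P j l ∧ E = {a | a ∈ l}

/-- A `P_{t_j}`-crossing of `N`: a `P_{t_j}`-semi-cycle with all its
`P_{t_j}`-arcs removed. -/
def IsCrossing (P : Fin k → Fin k → List N.A) (j : Fin k) (E : Set N.A) : Prop :=
  ∃ l : List N.A, N.IsRegularCycle P j l ∧ E = {a | a ∈ l ∧ ¬ N.isPArc P j a}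

end KPairNetwork

/-! ### Compatibility shims -/

@[simp]
def List.get? {α : Type*} (l : List α) (n : ℕ) : Option α := l[n]?

theorem List.get?_eq_get {α : Type*} {l : List α} {n : ℕ} (h : n < l.length) :
    l.get? n = some (l.get ⟨n, h⟩) := by
  simp [List.get?, h]

theorem List.get?_eq_none {α : Type*} {l : List α} {n : ℕ} : l.get? n = none ↔ l.length ≤ n := by
  simp [List.get?]

theorem List.get_take {α : Type*} (l : List α) {i n : ℕ} (h : i < l.length) (hn : i < n) :
    l.get ⟨i, h⟩ = (l.take n).get ⟨i, by rw [List.length_take]; omega⟩ := by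
  simp

theorem List.get_drop {α : Type*} (l : List α) {i j : ℕ} (h : i + j < l.length) :
    l.get ⟨i + j, h⟩ = (l.drop i).get ⟨j, by rw [List.length_drop]; omega⟩ := by
  simp

theorem List.drop_eq_nil_iff_le {α : Type*} {l : List α} {k : ℕ} : l.drop k = [] ↔ l.length ≤ k :=
  List.drop_eq_nil_iff


namespace KPairNetwork

variable {k : ℕ} {N : KPairNetwork k}

/-! ### List helper lemmas -/

lemma list_head?_drop {α : Type*} : ∀ (l : List α) (n : ℕ), (l.drop n).head? = l.get? n := by
  intro l
  induction l with
  | nil => intro n; simp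
  | cons h t ih =>
    intro n
    cases n with
    | zero => simp
    | succ m => simpa using ih m

lemma list_getLast?_take {α : Type*} : ∀ (l : List α) (n : ℕ), n < l.length →
    (l.take (n+1)).getLast? = l.get? n := by
  intro l
  induction l with
  | nil => intro n hn; simp at hn
  | cons h t ih =>
    intro n hn
    cases n with
    | zero =>
      simp
    | succ m =>
      have hm : m < t.length := by simpa using hn
      have : (h :: t).take (m+2) = h :: t.take (m+1) := rfl
      rw [this]
      have hne : t.take (m+1) ≠ [] := by
        apply List.ne_nil_of_length_pos
        rw [List.length_take]
        omega
      rw [show (h :: t.take (m+1)) = [h] ++ t.take (m+1) from rfl, List.getLast?_append]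
      rw [ih m hm]
      have : ∃ a, t.get? m = some a := by
        rw [List.get?_eq_get hm]; exact ⟨_, rfl⟩
      rcases this with ⟨a, ha⟩
      have ha' : t[m]? = some a := by simpa using ha
      simp [ha']

lemma list_head?_take {α : Type*} (l : List α) (n : ℕ) (hn : 0 < n) :
    (l.take n).head? = l.head? := by
  cases l with
  | nil => simp
  | cons h t =>
    cases n with
    | zero => omega
    | succ m => rfl

lemma list_getLast?_drop_ne {α : Type*} (l : List α) (n : ℕ) (h : l.drop n ≠ []) :
    (l.drop n).getLast? = l.getLast? := by
  conv_rhs => rw [← List.take_append_drop n l]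
  rw [List.getLast?_append]
  rcases List.exists_mem_of_ne_nil _ h with ⟨a, _⟩
  cases hd : (l.drop n).getLast? with
  | none => rw [List.getLast?_eq_none_iff] at hd; exact absurd hd h
  | some b => rfl

lemma list_mem_take_exists {α : Type*} {l : List α} {n : ℕ} {a : α}
    (h : a ∈ l.take n) : ∃ (j : ℕ) (hj : j < l.length), j < n ∧ l.get ⟨j, hj⟩ = a := by
  rcases List.mem_iff_get.1 h with ⟨⟨j, hj⟩, hget⟩
  have hjn : j < n := by
    have := hj; rw [List.length_take] at this; omega
  have hjl : j < l.length := by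
    have := hj; rw [List.length_take] at this; omega
  refine ⟨j, hjl, hjn, ?_⟩
  rw [← hget, List.get_take _ hjl hjn]

lemma list_mem_drop_exists {α : Type*} {l : List α} {n : ℕ} {a : α}
    (h : a ∈ l.drop n) : ∃ (j : ℕ) (hj : j < l.length), n ≤ j ∧ l.get ⟨j, hj⟩ = a := by
  rcases List.mem_iff_get.1 h with ⟨⟨j, hj⟩, hget⟩
  have hlen : (l.drop n).length = l.length - n := List.length_drop
  have hjl : n + j < l.length := by rw [hlen] at hj; omega
  exact ⟨n + j, hjl, by omega, (List.get_drop l hjl).trans hget⟩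

lemma list_get_mem_take {α : Type*} {l : List α} {j n : ℕ} (hj : j < l.length) (hjn : j < n) :
    l.get ⟨j, hj⟩ ∈ l.take n := by
  rw [List.get_take _ hj hjn]
  exact List.get_mem _ _

/-! ### Cut positions along arc lists -/

/-- The vertex `v` sits at position `n` along the arc list `p`. -/
def CutAt (N : KPairNetwork k) (p : List N.A) (n : ℕ) (v : N.V) : Prop :=
  n ≤ p.length ∧ (∀ a, p.get? n = some a → N.tail a = v) ∧
    (∀ a, 0 < n → p.get? (n - 1) = some a → N.head a = v)

noncomputable def topo (N : KPairNetwork k) : N.V → ℕ := N.acyclic.choose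

lemma topo_lt (N : KPairNetwork k) (a : N.A) : N.topo (N.tail a) < N.topo (N.head a) :=
  N.acyclic.choose_spec a

/-- abbreviation for the chain relation of paths -/
def ChainRel (N : KPairNetwork k) : Prop → Prop := id

lemma chain_step {p : List N.A} (hc : p.Chain' (fun a b => N.head a = N.tail b))
    {i : ℕ} (h : i + 1 < p.length) :
    N.head (p.get ⟨i, by omega⟩) = N.tail (p.get ⟨i + 1, h⟩) :=
  List.isChain_iff_getElem.1 hc i (by omega)

lemma topo_tail_mono {p : List N.A} (hc : p.Chain' (fun a b => N.head a = N.tail b)) :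
    ∀ (d i : ℕ) (h : i + d < p.length),
      N.topo (N.tail (p.get ⟨i, by omega⟩)) ≤ N.topo (N.tail (p.get ⟨i + d, h⟩)) := by
  intro d
  induction d with
  | zero => intro i h; exact le_refl _
  | succ e ih =>
    intro i h
    have h1 : i + e < p.length := by omega
    have h2 : (i + e) + 1 < p.length := by omega
    refine le_of_lt ?_
    have step : N.topo (N.tail (p.get ⟨i + e, h1⟩)) < N.topo (N.tail (p.get ⟨i + (e+1), h⟩)) := by
      have hcs : N.head (p.get ⟨i + e, by omega⟩) = N.tail (p.get ⟨i + e + 1, h2⟩) :=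
        chain_step hc h2
      have : N.topo (N.tail (p.get ⟨i + e, h1⟩)) < N.topo (N.head (p.get ⟨i + e, h1⟩)) :=
        N.topo_lt _
      rw [hcs] at this
      exact this
    exact lt_of_le_of_lt (ih i h1) step

lemma topo_tail_strict {p : List N.A} (hc : p.Chain' (fun a b => N.head a = N.tail b))
    {i j : ℕ} (hij : i < j) (hj : j < p.length) :
    N.topo (N.tail (p.get ⟨i, by omega⟩)) < N.topo (N.tail (p.get ⟨j, hj⟩)) := by
  rcases Nat.exists_eq_add_of_lt hij with ⟨d, rfl⟩
  have h1 : i + d < p.length := by omega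
  have h2 : (i + d) + 1 < p.length := by omega
  have step : N.topo (N.tail (p.get ⟨i + d, h1⟩)) < N.topo (N.tail (p.get ⟨i + d + 1, hj⟩)) := by
    have hcs : N.head (p.get ⟨i + d, by omega⟩) = N.tail (p.get ⟨i + d + 1, h2⟩) :=
      chain_step hc h2
    have := N.topo_lt (p.get ⟨i + d, h1⟩)
    rw [hcs] at this
    exact this
  exact lt_of_le_of_lt (topo_tail_mono hc d i h1) step

lemma nodup_of_chain {p : List N.A} (hc : p.Chain' (fun a b => N.head a = N.tail b)) :
    p.Nodup := by
  rw [List.nodup_iff_injective_get]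
  rintro ⟨i, hi⟩ ⟨j, hj⟩ hg
  by_contra hne
  have hij : i ≠ j := fun hh => hne (by simpa using hh)
  rcases Nat.lt_or_ge i j with hlt | hge
  · have := topo_tail_strict hc hlt hj
    rw [hg] at this
    exact lt_irrefl _ this
  · have hlt : j < i := by omega
    have := topo_tail_strict hc hlt hi
    rw [hg] at this
    exact lt_irrefl _ this

lemma mem_some_eq {α : Type*} {a b : α} (h : a ∈ (some b : Option α)) : a = b :=
  (Option.mem_some_iff.1 h).symm

lemma cut_tail_eq {p : List N.A} {n : ℕ} {v : N.V} (h : N.CutAt p n v) (hn : n < p.length) :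
    N.tail (p.get ⟨n, hn⟩) = v :=
  h.2.1 _ (List.get?_eq_get hn)

lemma cut_head_eq {p : List N.A} {n : ℕ} {v : N.V} (h : N.CutAt p n v) (hn : 0 < n)
    (hn' : n - 1 < p.length) : N.head (p.get ⟨n - 1, hn'⟩) = v :=
  h.2.2 _ hn (List.get?_eq_get hn')

lemma cut_unique_aux {p : List N.A} (hc : p.Chain' (fun a b => N.head a = N.tail b))
    {n n' : ℕ} {v : N.V} (h : N.CutAt p n v) (h' : N.CutAt p n' v) (hlt : n < n') : False := by
  have hn'le : n' ≤ p.length := h'.1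
  have hnlt : n < p.length := by omega
  have h1 : n' - 1 < p.length := by omega
  have e1 : N.tail (p.get ⟨n, hnlt⟩) = v := cut_tail_eq h hnlt
  have e2 : N.head (p.get ⟨n' - 1, h1⟩) = v := cut_head_eq h' (by omega) h1
  have mono : N.topo (N.tail (p.get ⟨n, hnlt⟩)) ≤ N.topo (N.tail (p.get ⟨n' - 1, h1⟩)) := by
    rcases Nat.eq_or_lt_of_le (show n ≤ n' - 1 by omega) with heq | hlt2
    · have : p.get ⟨n, hnlt⟩ = p.get ⟨n' - 1, h1⟩ := by
        congr 1
        simp only [Fin.mk.injEq]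
        omega
      rw [this]
    · exact le_of_lt (topo_tail_strict hc hlt2 h1)
  have hlast : N.topo (N.tail (p.get ⟨n' - 1, h1⟩)) < N.topo (N.head (p.get ⟨n' - 1, h1⟩)) :=
    N.topo_lt _
  rw [e1, e2] at *
  omega

lemma cut_unique {p : List N.A} (hc : p.Chain' (fun a b => N.head a = N.tail b))
    {n n' : ℕ} {v : N.V} (h : N.CutAt p n v) (h' : N.CutAt p n' v) : n = n' := by
  rcases Nat.lt_trichotomy n n' with hlt | he | hlt
  · exact absurd (cut_unique_aux hc h h' hlt) (by simp)
  · exact he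
  · exact absurd (cut_unique_aux hc h' h hlt) (by simp)

lemma cut_of_get_tail {p : List N.A} (hc : p.Chain' (fun a b => N.head a = N.tail b))
    {j : ℕ} (hj : j < p.length) : N.CutAt p j (N.tail (p.get ⟨j, hj⟩)) := by
  refine ⟨le_of_lt hj, ?_, ?_⟩
  · intro a ha
    rw [List.get?_eq_get hj] at ha
    cases ha
    rfl
  · intro a h0 ha
    have hj1 : j - 1 < p.length := by omega
    rw [List.get?_eq_get hj1] at ha
    cases ha
    have hstep : (j - 1) + 1 < p.length := by omega
    have := chain_step hc hstep
    have heq : p.get ⟨(j-1)+1, hstep⟩ = p.get ⟨j, hj⟩ := by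
      congr 1
      simp only [Fin.mk.injEq]
      omega
    rw [heq] at this
    exact this

lemma cut_of_get_head {p : List N.A} (hc : p.Chain' (fun a b => N.head a = N.tail b))
    {j : ℕ} (hj : j < p.length) : N.CutAt p (j + 1) (N.head (p.get ⟨j, hj⟩)) := by
  refine ⟨by omega, ?_, ?_⟩
  · intro a ha
    have hj1 : j + 1 < p.length := by
      rcases Nat.lt_or_ge (j+1) p.length with h | h
      · exact h
      · rw [List.get?_eq_none.2 h] at ha; cases ha
    rw [List.get?_eq_get hj1] at ha
    cases ha
    exact (chain_step hc hj1).symm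
  · intro a _ ha
    have : j + 1 - 1 = j := by omega
    rw [this, List.get?_eq_get hj] at ha
    cases ha
    rfl

lemma cut_exists {p : List N.A} (hc : p.Chain' (fun a b => N.head a = N.tail b))
    {v : N.V} (hv : v ∈ N.pathVerts p) : ∃ n, N.CutAt p n v := by
  rcases hv with ⟨a, ha, hva⟩
  rcases List.mem_iff_get.1 ha with ⟨⟨j, hj⟩, rfl⟩
  rcases hva with rfl | rfl
  · exact ⟨j, cut_of_get_tail hc hj⟩
  · exact ⟨j + 1, cut_of_get_head hc hj⟩

lemma list_head?_get0 {α : Type*} (l : List α) (h : l ≠ []) : l.head? = l.get? 0 := by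
  cases l with
  | nil => exact absurd rfl h
  | cons a t => rfl

lemma list_getLast?_getlen {α : Type*} (l : List α) (h : l ≠ []) :
    l.getLast? = l.get? (l.length - 1) := by
  have hlen : 0 < l.length := List.length_pos_iff.2 h
  have h1 : l.length - 1 < l.length := by omega
  have := list_getLast?_take l (l.length - 1) h1
  rw [show l.length - 1 + 1 = l.length by omega, List.take_length] at this
  exact this

lemma path_cut_zero {p : List N.A} {u w v : N.V} (hp : N.IsPathFrom u w p)
    (h : N.CutAt p 0 v) : v = u := by
  have hne : p ≠ [] := hp.1
  have hlen : 0 < p.length := List.length_pos_iff.2 hne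
  have := cut_tail_eq h hlen
  have hu := hp.2.2.1 (p.get ⟨0, hlen⟩) (by rw [list_head?_get0 p hne]; exact List.get?_eq_get hlen)
  rw [← this, hu]

lemma path_cut_len {p : List N.A} {u w v : N.V} (hp : N.IsPathFrom u w p)
    {n : ℕ} (h : N.CutAt p n v) (hn : n = p.length) : v = w := by
  have hne : p ≠ [] := hp.1
  have hlen : 0 < p.length := List.length_pos_iff.2 hne
  have h1 : n - 1 < p.length := by omega
  have := cut_head_eq h (by omega) h1
  have hw := hp.2.2.2 (p.get ⟨n - 1, h1⟩)
    (by rw [list_getLast?_getlen p hne, show p.length - 1 = n - 1 by omega]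
        exact List.get?_eq_get h1)
  rw [← this, hw]

lemma cut_zero_intro {p : List N.A} {u w : N.V} (hp : N.IsPathFrom u w p) : N.CutAt p 0 u := by
  refine ⟨by omega, ?_, by omega⟩
  intro a ha
  exact hp.2.2.1 a (by rw [list_head?_get0 p hp.1]; exact ha)

lemma cut_len_intro {p : List N.A} {u w : N.V} (hp : N.IsPathFrom u w p) :
    N.CutAt p p.length w := by
  refine ⟨le_refl _, ?_, ?_⟩
  · intro a ha
    rw [List.get?_eq_none.2 (le_refl _)] at ha
    cases ha
  · intro a _ ha
    exact hp.2.2.2 a (by rw [list_getLast?_getlen p hp.1]; exact ha)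

lemma cut_lt_of_ne_end {p : List N.A} {u w v : N.V} (hp : N.IsPathFrom u w p)
    {n : ℕ} (h : N.CutAt p n v) (hne : v ≠ w) : n < p.length := by
  rcases Nat.lt_or_ge n p.length with h' | h'
  · exact h'
  · exact absurd (path_cut_len hp h (le_antisymm h.1 h')) hne

lemma tail_mem_pathVerts {p : List N.A} {a : N.A} (ha : a ∈ p) : N.tail a ∈ N.pathVerts p :=
  ⟨a, ha, Or.inl rfl⟩

lemma head_mem_pathVerts {p : List N.A} {a : N.A} (ha : a ∈ p) : N.head a ∈ N.pathVerts p :=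
  ⟨a, ha, Or.inr rfl⟩

lemma pathVerts_mono {l l' : List N.A} (h : l.Sublist l') : N.pathVerts l ⊆ N.pathVerts l' := by
  rintro v ⟨a, ha, hv⟩
  exact ⟨a, h.subset ha, hv⟩

lemma src_eq_start {p : List N.A} {u w : N.V} (hp : N.IsPathFrom u w p) {c : Fin k}
    (hv : N.src c ∈ N.pathVerts p) : N.src c = u := by
  rcases cut_exists hp.2.1 hv with ⟨n, hcut⟩
  rcases Nat.eq_zero_or_pos n with rfl | hpos
  · exact path_cut_zero hp hcut
  · exfalso
    have h1 : n - 1 < p.length := by have := hcut.1; omega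
    exact N.src_no_in c (p.get ⟨n-1, h1⟩) (cut_head_eq hcut hpos h1)

lemma snk_eq_end {p : List N.A} {u w : N.V} (hp : N.IsPathFrom u w p) {c : Fin k}
    (hv : N.snk c ∈ N.pathVerts p) : N.snk c = w := by
  rcases cut_exists hp.2.1 hv with ⟨n, hcut⟩
  rcases Nat.lt_or_ge n p.length with hlt | hge
  · exact absurd (cut_tail_eq hcut hlt) (N.snk_no_out c _)
  · exact path_cut_len hp hcut (le_antisymm hcut.1 hge)

lemma splice_isPathFrom {q p : List N.A} {u' w' u w v : N.V} {m n : ℕ}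
    (hq : N.IsPathFrom u' w' q) (hp : N.IsPathFrom u w p)
    (hm : N.CutAt q m v) (hn : N.CutAt p n v) (hne : u' ≠ w) :
    N.IsPathFrom u' w (q.take m ++ p.drop n) := by
  have hqc := hq.2.1
  have hpc := hp.2.1
  refine ⟨?_, ?_, ?_, ?_⟩
  · -- nonempty
    intro hnil
    rcases List.append_eq_nil_iff.1 hnil with ⟨h1, h2⟩
    have hm0 : m = 0 := by
      rcases List.take_eq_nil_iff.1 h1 with h | h
      · exact h
      · exact absurd h hq.1
    have hnlen : n = p.length := le_antisymm hn.1 (List.drop_eq_nil_iff_le.1 h2)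
    subst hm0
    exact hne ((path_cut_zero hq hm).symm.trans (path_cut_len hp hn hnlen))
  · -- chain
    refine List.IsChain.append (hqc.take m) (hpc.drop n) ?_
    intro x hx y hy
    have htm : q.take m ≠ [] := by
      intro hcon; rw [hcon] at hx; cases hx
    have hm0 : 0 < m := by
      rcases Nat.eq_zero_or_pos m with rfl | h
      · simp at htm
      · exact h
    have hm1 : m - 1 < q.length := by have := hm.1; omega
    have hxval : x = q.get ⟨m - 1, hm1⟩ := by
      rw [(by omega : m = (m-1)+1)] at hx
      rw [list_getLast?_take q (m-1) hm1, List.get?_eq_get hm1] at hx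
      exact mem_some_eq hx
    have hdn : p.drop n ≠ [] := by
      intro hcon; rw [hcon] at hy; cases hy
    have hnlen : n < p.length := by
      rcases Nat.lt_or_ge n p.length with h | h
      · exact h
      · exact absurd (List.drop_eq_nil_of_le h) hdn
    have hyval : y = p.get ⟨n, hnlen⟩ := by
      rw [list_head?_drop p n, List.get?_eq_get hnlen] at hy
      exact mem_some_eq hy
    rw [hxval, hyval, cut_head_eq hm hm0 hm1, cut_tail_eq hn hnlen]
  · -- starts at u'
    intro a ha
    rw [List.head?_append] at ha
    by_cases hm0 : m = 0
    · subst hm0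
      rw [List.take_zero] at ha
      simp only [List.head?_nil, Option.none_or] at ha
      rw [list_head?_drop p n] at ha
      have : N.tail a = v := hn.2.1 a (Option.mem_def.1 ha)
      rw [this]
      exact path_cut_zero hq hm
    · have htm : q.take m ≠ [] := by
        intro hcon
        rcases List.take_eq_nil_iff.1 hcon with h | h
        · exact hm0 h
        · exact hq.1 h
      rw [list_head?_take q m (by omega)] at ha
      rcases hq' : q.head? with _ | b
      · rw [hq'] at ha; rw [list_head?_get0 q hq.1, List.get?_eq_none] at hq'
        have := List.length_pos_iff.2 hq.1
        omega
      · rw [hq'] at ha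
        have : a = b := mem_some_eq (by exact ha)
        subst this
        exact hq.2.2.1 a hq'
  · -- ends at w
    intro a ha
    rw [List.getLast?_append] at ha
    by_cases hd0 : p.drop n = []
    · rw [hd0] at ha
      simp only [List.getLast?_nil, Option.none_or] at ha
      have hnlen : n = p.length := le_antisymm hn.1 (List.drop_eq_nil_iff_le.1 hd0)
      have hvw : v = w := path_cut_len hp hn hnlen
      have htm : q.take m ≠ [] := by
        intro hcon; rw [hcon] at ha; cases ha
      have hm0 : 0 < m := by
        rcases Nat.eq_zero_or_pos m with rfl | h
        · simp at htm
        · exact h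
      have hm1 : m - 1 < q.length := by have := hm.1; omega
      rw [(by omega : m = (m-1)+1), list_getLast?_take q (m-1) hm1,
        List.get?_eq_get hm1] at ha
      have := mem_some_eq ha
      subst this
      rw [cut_head_eq hm hm0 hm1]
      exact hvw
    · rw [list_getLast?_drop_ne p n hd0] at ha
      rcases hp' : p.getLast? with _ | b
      · rw [List.getLast?_eq_none_iff] at hp'
        exact absurd hp' hp.1
      · rw [hp'] at ha
        have : a = b := mem_some_eq (by exact ha)
        subst this
        exact hp.2.2.2 a hp'

/-! ### Segments and longest common segments -/

lemma start_mem_pathVerts {p : List N.A} {u w : N.V} (hp : N.IsPathFrom u w p) :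
    u ∈ N.pathVerts p := by
  have hlen : 0 < p.length := List.length_pos_iff.2 hp.1
  have := hp.2.2.1 (p.get ⟨0, hlen⟩)
    (by rw [list_head?_get0 p hp.1]; exact List.get?_eq_get hlen)
  exact ⟨p.get ⟨0, hlen⟩, List.get_mem _ _, Or.inl this.symm⟩

lemma src_ne_end {p : List N.A} {u w : N.V} (hp : N.IsPathFrom u w p) (c : Fin k) :
    N.src c ≠ w := by
  intro hcon
  have hne := hp.1
  have hlen : 0 < p.length := List.length_pos_iff.2 hne
  have h1 : p.length - 1 < p.length := by omega
  have := hp.2.2.2 (p.get ⟨p.length - 1, h1⟩)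
    (by rw [list_getLast?_getlen p hne]; exact List.get?_eq_get h1)
  exact N.src_no_in c _ (this.trans hcon.symm)

lemma segLE_refl (s : N.V × List N.A) : N.SegLE s s :=
  ⟨List.infix_refl _, Set.mem_insert _ _⟩

lemma segLE_trans {s t u : N.V × List N.A} (h1 : N.SegLE s t) (h2 : N.SegLE t u) :
    N.SegLE s u := by
  refine ⟨h1.1.trans h2.1, ?_⟩
  rcases h1.2 with h | h
  · rw [h]; exact h2.2
  · exact Set.mem_insert_iff.2 (Or.inr (pathVerts_mono h2.1.sublist h))

lemma segLE_length_lt {s s' : N.V × List N.A} (hs : N.IsSeg s) (hs' : N.IsSeg s')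
    (h : N.SegLE s s') (hne : s ≠ s') : s.2.length < s'.2.length := by
  rcases Nat.lt_or_ge s.2.length s'.2.length with hlt | hge
  · exact hlt
  · exfalso
    have hlen : s.2.length = s'.2.length := le_antisymm h.1.length_le hge
    have heq2 : s.2 = s'.2 := h.1.eq_of_length hlen
    apply hne
    rcases hs2 : s.2 with _ | ⟨a, t⟩
    · have hs'2 : s'.2 = [] := by rw [← heq2, hs2]
      have := h.2
      rw [Prod.ext_iff]
      refine ⟨?_, by rw [heq2]⟩
      unfold KPairNetwork.segVerts at this
      rcases this with h' | h'
      · exact h'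
      · rw [hs'2] at h'
        rcases h' with ⟨b, hb, _⟩
        cases hb
    · have h1 : s.1 = N.tail a := by
        have := hs.2 a (by rw [hs2]; rfl)
        rw [this]
      have h2 : s'.1 = N.tail a := by
        have := hs'.2 a (by rw [← heq2, hs2]; rfl)
        rw [this]
      rw [Prod.ext_iff]
      exact ⟨h1.trans h2.symm, heq2⟩

lemma mem_pair_left {α : Type*} (a b : α) : a ∈ ({a, b} : Set α) := Set.mem_insert _ _
lemma mem_pair_right {α : Type*} (a b : α) : b ∈ ({a, b} : Set α) :=
  Set.mem_insert_iff.2 (Or.inr rfl)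

lemma exists_lcs {p₁ p₂ : List N.A} (c : N.V × List N.A)
    (hseg : N.IsSeg c) (h1 : N.SegOn c p₁) (h2 : N.SegOn c p₂) :
    ∃ s, N.IsLCS {p₁, p₂} s ∧ N.SegLE c s := by
  suffices H : ∀ (d : ℕ) (c : N.V × List N.A), N.IsSeg c → N.SegOn c p₁ → N.SegOn c p₂ →
      p₁.length - c.2.length ≤ d → ∃ s, N.IsLCS {p₁, p₂} s ∧ N.SegLE c s by
    exact H p₁.length c hseg h1 h2 (by omega)
  intro d
  induction d with
  | zero =>
    intro c hseg h1 h2 hd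
    by_cases hmax : ∀ s', N.IsSeg s' → N.SegLE c s' → s' ≠ c →
        ¬(N.SegOn s' p₁ ∧ N.SegOn s' p₂)
    · refine ⟨c, ⟨hseg, ?_, ?_⟩, segLE_refl c⟩
      · intro p hp
        rcases Set.mem_insert_iff.1 hp with rfl | hp
        · exact h1
        · rw [Set.mem_singleton_iff.1 hp]; exact h2
      · intro s' hs' hle hne
        by_cases hon : N.SegOn s' p₁
        · exact ⟨p₂, mem_pair_right _ _, fun hcon => hmax s' hs' hle hne ⟨hon, hcon⟩⟩
        · exact ⟨p₁, mem_pair_left _ _, hon⟩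
    · exfalso
      push_neg at hmax
      rcases hmax with ⟨c', hseg', hle', hne', hon1, hon2⟩
      have hlt := segLE_length_lt hseg hseg' hle' (fun h => hne' h.symm)
      have hbound : c'.2.length ≤ p₁.length := hon1.1.length_le
      omega
  | succ d ih =>
    intro c hseg h1 h2 hd
    by_cases hmax : ∀ s', N.IsSeg s' → N.SegLE c s' → s' ≠ c →
        ¬(N.SegOn s' p₁ ∧ N.SegOn s' p₂)
    · refine ⟨c, ⟨hseg, ?_, ?_⟩, segLE_refl c⟩
      · intro p hp
        rcases Set.mem_insert_iff.1 hp with rfl | hp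
        · exact h1
        · rw [Set.mem_singleton_iff.1 hp]; exact h2
      · intro s' hs' hle hne
        by_cases hon : N.SegOn s' p₁
        · exact ⟨p₂, mem_pair_right _ _, fun hcon => hmax s' hs' hle hne ⟨hon, hcon⟩⟩
        · exact ⟨p₁, mem_pair_left _ _, hon⟩
    · push_neg at hmax
      rcases hmax with ⟨c', hseg', hle', hne', hon1, hon2⟩
      have hlt := segLE_length_lt hseg hseg' hle' (fun h => hne' h.symm)
      have hbound : c'.2.length ≤ p₁.length := hon1.1.length_le
      rcases ih c' hseg' hon1 hon2 (by omega) with ⟨s, hs, hle2⟩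
      exact ⟨s, hs, segLE_trans hle' hle2⟩

lemma single_vertex_seg (v : N.V) : N.IsSeg (v, []) := by
  constructor
  · exact List.isChain_nil
  · intro a ha; cases ha

lemma segOn_single {v : N.V} {p : List N.A} (hv : v ∈ N.pathVerts p) :
    N.SegOn (v, []) p := ⟨List.nil_infix, hv⟩

/-! ### Cardinality helpers -/

lemma card_one_unique {α : Type*} {S : Set α} (h : Nat.card S = 1) {a b : α}
    (ha : a ∈ S) (hb : b ∈ S) : a = b := by
  have hsub := (Nat.card_eq_one_iff_unique.1 h).1
  have : (⟨a, ha⟩ : S) = ⟨b, hb⟩ := Subsingleton.elim _ _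
  exact congrArg Subtype.val this

lemma card_ne_one_second {α : Type*} {S : Set α} (h : Nat.card S ≠ 1) {a : α} (ha : a ∈ S) :
    ∃ b ∈ S, b ≠ a := by
  by_contra hc
  push_neg at hc
  apply h
  rw [Nat.card_eq_one_iff_unique]
  constructor
  · constructor
    rintro ⟨u, hu⟩ ⟨v, hv⟩
    have hu' := hc u hu
    have hv' := hc v hv
    subst hu'
    subst hv'
    rfl
  · exact ⟨⟨a, ha⟩⟩

/-! ### Disjointness from unique l.c.s. counts -/

lemma lcs_disjoint {P : Fin k → Fin k → List N.A} (hP : N.IsStrongSystem P)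
    {x y z a : Fin k} (hcard : N.lcsCount P x y (P z y) = 1) (haz : a ≠ z) {v : N.V}
    (hva : v ∈ N.pathVerts (P a x)) (hvz : v ∈ N.pathVerts (P z y)) : False := by
  have hpzx := hP.1 z x
  have hpzy := hP.1 z y
  have hpax := hP.1 a x
  rcases exists_lcs (N.src z, []) (single_vertex_seg _)
      (segOn_single (start_mem_pathVerts hpzx)) (segOn_single (start_mem_pathVerts hpzy))
    with ⟨σ, hσ, hσge⟩
  rcases exists_lcs (v, []) (single_vertex_seg _)
      (segOn_single hva) (segOn_single hvz) with ⟨s, hs, _⟩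
  have hσmem : σ ∈ {s : N.V × List N.A | N.IsPairLCSOn P x y (P z y) s} :=
    ⟨⟨z, z, hσ⟩, hσ.2.1 (P z y) (mem_pair_right _ _)⟩
  have hsmem : s ∈ {s : N.V × List N.A | N.IsPairLCSOn P x y (P z y) s} :=
    ⟨⟨a, z, hs⟩, hs.2.1 (P z y) (mem_pair_right _ _)⟩
  have heq : σ = s := card_one_unique hcard hσmem hsmem
  have hona : N.SegOn σ (P a x) := heq ▸ hs.2.1 (P a x) (mem_pair_left _ _)
  have hsrc : N.src z ∈ N.segVerts σ := hσge.2
  have hmem : N.src z ∈ N.pathVerts (P a x) := by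
    rcases Set.mem_insert_iff.1 hsrc with h | h
    · rw [h]; exact hona.2
    · exact pathVerts_mono hona.1.sublist h
  have := src_eq_start hpax hmem
  exact haz (N.src_inj this.symm)

/-! ### Stability implies vertex-disjointness (per sink) -/

lemma mem_drop_head {α : Type*} {l : List α} {n : ℕ} (hn : n < l.length) :
    l.get ⟨n, hn⟩ ∈ l.drop n := by
  apply List.mem_of_mem_head?
  rw [list_head?_drop l n]
  exact List.get?_eq_get hn

lemma nodup_take_drop {p : List N.A} (hc : p.Chain' (fun a b => N.head a = N.tail b))
    {n : ℕ} {e : N.A} (h1 : e ∈ p.take n) (h2 : e ∈ p.drop n) : False := by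
  have hnd : (p.take n ++ p.drop n).Nodup := by
    rw [List.take_append_drop]; exact nodup_of_chain hc
  rcases List.nodup_append.1 hnd with ⟨_, _, hdisj⟩
  exact hdisj _ h1 _ h2 rfl

lemma stable_vertex_disjoint {P : Fin k → Fin k → List N.A} (hP : N.IsStableSystem P)
    {x a b : Fin k} (hab : a ≠ b) {v : N.V}
    (hva : v ∈ N.pathVerts (P a x)) (hvb : v ∈ N.pathVerts (P b x)) : v = N.snk x := by
  by_contra hne
  have hpa := hP.1.1 a x
  have hpb := hP.1.1 b x
  rcases cut_exists hpa.2.1 hva with ⟨n, hcn⟩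
  rcases cut_exists hpb.2.1 hvb with ⟨m, hcm⟩
  have hnlt : n < (P a x).length := cut_lt_of_ne_end hpa hcn hne
  have hmlt : m < (P b x).length := cut_lt_of_ne_end hpb hcm hne
  set Qa : List N.A := (P a x).take n ++ (P b x).drop m with hQa
  set Qb : List N.A := (P b x).take m ++ (P a x).drop n with hQb
  classical
  set Q : Fin k → List N.A := fun c => if c = a then Qa else if c = b then Qb else P c x with hQ
  have hQpaths : ∀ i, N.IsPathFrom (N.src i) (N.snk x) (Q i) := by
    intro i
    by_cases hia : i = a
    · subst hia
      simp only [hQ, if_pos rfl]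
      exact splice_isPathFrom hpa hpb hcn hcm (src_ne_end hpb i)
    · by_cases hib : i = b
      · subst hib
        simp only [hQ, if_neg hia, if_pos rfl]
        exact splice_isPathFrom hpb hpa hcm hcn (src_ne_end hpa i)
      · simp only [hQ, if_neg hia, if_neg hib]
        exact hP.1.1 i x
  have fam := hP.1.2 x
  have hmemQa : ∀ e, e ∈ Qa → e ∈ (P a x).take n ∨ e ∈ (P b x).drop m := by
    intro e he; exact List.mem_append.1 he
  have hmemQb : ∀ e, e ∈ Qb → e ∈ (P b x).take m ∨ e ∈ (P a x).drop n := by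
    intro e he; exact List.mem_append.1 he
  have htakea : ∀ e, e ∈ (P a x).take n → e ∈ P a x := fun e he => (List.take_sublist _ _).subset he
  have htakeb : ∀ e, e ∈ (P b x).take m → e ∈ P b x := fun e he => (List.take_sublist _ _).subset he
  have hdropa : ∀ e, e ∈ (P a x).drop n → e ∈ P a x := fun e he => (List.drop_sublist _ _).subset he
  have hdropb : ∀ e, e ∈ (P b x).drop m → e ∈ P b x := fun e he => (List.drop_sublist _ _).subset he
  have hQA : Q a = Qa := by simp [hQ]
  have hQB : Q b = Qb := by simp [hQ, Ne.symm hab]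
  have hQO : ∀ i, i ≠ a → i ≠ b → Q i = P i x := by
    intro i h1 h2; simp [hQ, h1, h2]
  have hQdisj : ∀ i i', i ≠ i' → ∀ e : N.A, e ∈ Q i → e ∉ Q i' := by
    intro i i' hii' e hei hei'
    rcases eq_or_ne i a with hia | hia
    · rw [hia] at hii' hei
      rw [hQA] at hei
      rcases eq_or_ne i' b with hi'b | hi'b
      · rw [hi'b] at hii' hei'
        rw [hQB] at hei'
        rcases List.mem_append.1 hei with h1 | h1 <;> rcases List.mem_append.1 hei' with h2 | h2
        · exact fam a b hab e (htakea e h1) (htakeb e h2)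
        · exact nodup_take_drop hpa.2.1 h1 h2
        · exact nodup_take_drop hpb.2.1 h2 h1
        · exact fam b a (Ne.symm hab) e (hdropb e h1) (hdropa e h2)
      · rw [hQO i' (Ne.symm hii') hi'b] at hei'
        rcases List.mem_append.1 hei with h1 | h1
        · exact fam a i' hii' e (htakea e h1) hei'
        · exact fam b i' (Ne.symm hi'b) e (hdropb e h1) hei'
    · rcases eq_or_ne i b with hib | hib
      · rw [hib] at hii' hei
        rw [hQB] at hei
        rcases eq_or_ne i' a with hi'a | hi'a
        · rw [hi'a] at hii' hei'
          rw [hQA] at hei'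
          rcases List.mem_append.1 hei with h1 | h1 <;>
            rcases List.mem_append.1 hei' with h2 | h2
          · exact fam b a (Ne.symm hab) e (htakeb e h1) (htakea e h2)
          · exact nodup_take_drop hpb.2.1 h1 h2
          · exact nodup_take_drop hpa.2.1 h2 h1
          · exact fam a b hab e (hdropa e h1) (hdropb e h2)
        · rw [hQO i' hi'a (Ne.symm hii')] at hei'
          rcases List.mem_append.1 hei with h1 | h1
          · exact fam b i' hii' e (htakeb e h1) hei'
          · exact fam a i' (Ne.symm hi'a) e (hdropa e h1) hei'
      · rw [hQO i hia hib] at hei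
        rcases eq_or_ne i' a with hi'a | hi'a
        · rw [hi'a] at hii' hei'
          rw [hQA] at hei'
          rcases List.mem_append.1 hei' with h1 | h1
          · exact fam i a hia e hei (htakea e h1)
          · exact fam i b hib e hei (hdropb e h1)
        · rcases eq_or_ne i' b with hi'b | hi'b
          · rw [hi'b] at hii' hei'
            rw [hQB] at hei'
            rcases List.mem_append.1 hei' with h1 | h1
            · exact fam i b hib e hei (htakeb e h1)
            · exact fam i a hia e hei (hdropa e h1)
          · rw [hQO i' hi'a hi'b] at hei'
            exact fam i i' hii' e hei hei'
  have hstab := hP.2 x Q hQpaths hQdisj a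
  rw [hQA, hQa] at hstab
  have hlen : ((P a x).take n).length = n := by rw [List.length_take]; omega
  have hdrops : (P b x).drop m = (P a x).drop n := by
    have h2 := congrArg (List.drop n) hstab
    simp only [List.drop_left' hlen] at h2
    exact h2
  have hmem1 : (P a x).get ⟨n, hnlt⟩ ∈ (P a x).drop n := mem_drop_head hnlt
  have hmem2 : (P a x).get ⟨n, hnlt⟩ ∈ P b x := by
    rw [← hdrops] at hmem1
    exact hdropb _ hmem1
  exact fam a b hab _ (List.get_mem _ _) hmem2

/-! ### Classification of l.c.s.'s and crossing extraction -/

lemma cut_infix_last {p pre mid post : List N.A}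
    (hc : p.Chain' (fun a b => N.head a = N.tail b))
    (heq : pre ++ mid ++ post = p) (hmid : mid ≠ []) :
    N.CutAt p (pre.length + mid.length) (N.head (mid.getLast hmid)) ∧
      p.take (pre.length + mid.length) = pre ++ mid := by
  subst heq
  have hmlen : 0 < mid.length := List.length_pos_iff.2 hmid
  have hlen2 : (pre ++ mid).length = pre.length + mid.length := List.length_append
  have hplen : pre.length + mid.length ≤ (pre ++ mid ++ post).length := by
    simp only [List.length_append]; omega
  have hj : pre.length + mid.length - 1 < (pre ++ mid ++ post).length := by omega
  have h1 : pre.length + mid.length - 1 < (pre ++ mid).length := by omega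
  have hmi : pre.length + mid.length - 1 - pre.length < mid.length := by omega
  have hget : (pre ++ mid ++ post).get ⟨pre.length + mid.length - 1, hj⟩ = mid.getLast hmid := by
    simp only [List.get_eq_getElem, List.getLast_eq_getElem]
    rw [List.getElem_append_left h1, List.getElem_append_right (by omega)]
    congr 1
    omega
  have hcut := cut_of_get_head hc hj
  rw [hget] at hcut
  rw [(by omega : pre.length + mid.length - 1 + 1 = pre.length + mid.length)] at hcut
  refine ⟨hcut, ?_⟩
  exact List.take_left' hlen2

lemma classify_lcs {P : Fin k → Fin k → List N.A} (hP : N.IsStableSystem P)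
    {x y z a a' : Fin k} (hxy : x ≠ y) (haz : a ≠ z) (haa' : a ≠ a')
    (htri : ∀ c : Fin k, c = a ∨ c = a' ∨ c = z)
    (hcards : N.lcsCount P x y (P z y) = 1)
    {r : N.V × List N.A} (hr : N.IsPairLCSOn P x y (P a x) r) :
    (∃ v, v ∈ N.pathVerts (P a x) ∧ v ∈ N.pathVerts (P a' y)) ∨ N.IsLCS {P a x, P a y} r := by
  obtain ⟨⟨i, i', hlcs⟩, honA⟩ := hr
  have honix : N.SegOn r (P i x) := hlcs.2.1 _ (mem_pair_left _ _)
  have honi'y : N.SegOn r (P i' y) := hlcs.2.1 _ (mem_pair_right _ _)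
  have hw : ∃ w, w ∈ N.pathVerts (P a x) ∧ w ∈ N.pathVerts (P i' y) ∧
      (w ∈ N.pathVerts (P i x) ∨ ∃ e, e ∈ P i x ∧ e ∈ P a x) := by
    rcases hr2 : r.2 with _ | ⟨e, tl⟩
    · exact ⟨r.1, honA.2, honi'y.2, Or.inl honix.2⟩
    · have he : e ∈ r.2 := by rw [hr2]; exact List.mem_cons_self
      exact ⟨N.tail e, tail_mem_pathVerts (honA.1.sublist.subset he),
        tail_mem_pathVerts (honi'y.1.sublist.subset he),
        Or.inr ⟨e, honix.1.sublist.subset he, honA.1.sublist.subset he⟩⟩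
  obtain ⟨w, hwa, hwi', hwi⟩ := hw
  rcases htri i' with hi'a | hi'a' | hi'z
  · right
    rw [hi'a] at hwi' hlcs
    have hia : i = a := by
      by_contra hia
      rcases hwi with hwi | ⟨e, he1, he2⟩
      · have hsnk := stable_vertex_disjoint hP hia hwi hwa
        have := snk_eq_end (hP.1.1 a y) (hsnk ▸ hwi')
        exact hxy (N.snk_inj this)
      · exact hP.1.2 x i a hia e he1 he2
    rw [hia] at hlcs
    exact hlcs
  · left
    rw [hi'a'] at hwi'
    exact ⟨w, hwa, hwi'⟩
  · exfalso
    rw [hi'z] at hwi'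
    exact lcs_disjoint hP.1 hcards haz hwa hwi'

lemma two_lcs_diverge {P : Fin k → Fin k → List N.A} {x y a : Fin k}
    (hpax : N.IsPathFrom (N.src a) (N.snk x) (P a x))
    (hpay : N.IsPathFrom (N.src a) (N.snk y) (P a y))
    {s t : N.V × List N.A} (hs : N.IsLCS {P a x, P a y} s) (ht : N.IsLCS {P a x, P a y} t)
    (hst : s ≠ t) :
    ∃ (n m : ℕ) (v : N.V), N.CutAt (P a x) n v ∧ N.CutAt (P a y) m v ∧
      (P a x).take n ≠ (P a y).take m := by
  by_contra hcon
  have hcon' : ∀ (n m : ℕ) (v : N.V), N.CutAt (P a x) n v → N.CutAt (P a y) m v →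
      (P a x).take n = (P a y).take m := by
    intro n m v h1 h2
    by_contra hne
    exact hcon ⟨n, m, v, h1, h2, hne⟩
  have claim : ∀ c : N.V × List N.A, N.IsLCS {P a x, P a y} c →
      ∃ n : ℕ, c = (N.src a, (P a x).take n) := by
    intro c hc
    have honx : N.SegOn c (P a x) := hc.2.1 _ (mem_pair_left _ _)
    have hony : N.SegOn c (P a y) := hc.2.1 _ (mem_pair_right _ _)
    have hkey : ∃ (n m : ℕ) (v : N.V), N.CutAt (P a x) n v ∧ N.CutAt (P a y) m v ∧
        c.2 <:+: (P a x).take n ∧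
        (c.1 = N.src a ∨ c.1 ∈ N.pathVerts ((P a x).take n)) := by
      by_cases hmid : c.2 = []
      · rcases cut_exists hpax.2.1 honx.2 with ⟨n, hcn⟩
        rcases cut_exists hpay.2.1 hony.2 with ⟨m, hcm⟩
        refine ⟨n, m, c.1, hcn, hcm, by rw [hmid]; exact List.nil_infix, ?_⟩
        rcases Nat.eq_zero_or_pos n with rfl | hpos
        · exact Or.inl (path_cut_zero hpax hcn)
        · right
          have h1 : n - 1 < (P a x).length := by have := hcn.1; omega
          have := cut_head_eq hcn hpos h1
          rw [← this]
          exact head_mem_pathVerts (list_get_mem_take h1 (by omega))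
      · obtain ⟨pre, post, hsplit⟩ := honx.1
        obtain ⟨hcutx, htake⟩ := cut_infix_last hpax.2.1 hsplit hmid
        have hlast : c.2.getLast hmid ∈ c.2 := List.getLast_mem hmid
        have hvy : N.head (c.2.getLast hmid) ∈ N.pathVerts (P a y) :=
          head_mem_pathVerts (hony.1.sublist.subset hlast)
        rcases cut_exists hpay.2.1 hvy with ⟨m, hcm⟩
        refine ⟨pre.length + c.2.length, m, _, hcutx, hcm, ?_, ?_⟩
        · rw [htake]
          exact ⟨pre, [], by simp⟩
        · right
          have he : c.2.head hmid ∈ c.2 := List.head_mem hmid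
          have hemem : c.2.head hmid ∈ (P a x).take (pre.length + c.2.length) := by
            rw [htake]
            exact List.mem_append.2 (Or.inr he)
          have hc1 : c.1 = N.tail (c.2.head hmid) := by
            have := hc.1.2 (c.2.head hmid) (by rw [List.head?_eq_head hmid]; rfl)
            rw [this]
          rw [hc1]
          exact tail_mem_pathVerts hemem
    obtain ⟨n, m, v, hcn, hcm, hinf, hfst⟩ := hkey
    have hpieq := hcon' n m v hcn hcm
    have hinfy : (P a x).take n <:+: P a y := by
      rw [hpieq]; exact (List.take_prefix _ _).isInfix
    have hseg' : N.IsSeg (N.src a, (P a x).take n) := by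
      constructor
      · exact hpax.2.1.take n
      · intro e he
        have hne : (P a x).take n ≠ [] := by
          intro hcon2; rw [hcon2] at he; cases he
        have hpos : 0 < n := by
          rcases Nat.eq_zero_or_pos n with rfl | h
          · simp at hne
          · exact h
        rw [list_head?_take _ n hpos] at he
        exact hpax.2.2.1 e he
    have honx' : N.SegOn (N.src a, (P a x).take n) (P a x) :=
      ⟨(List.take_prefix _ _).isInfix, start_mem_pathVerts hpax⟩
    have hony' : N.SegOn (N.src a, (P a x).take n) (P a y) :=
      ⟨hinfy, start_mem_pathVerts hpay⟩
    have hle : N.SegLE c (N.src a, (P a x).take n) := by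
      refine ⟨hinf, ?_⟩
      rcases hfst with h | h
      · rw [h]; exact Set.mem_insert _ _
      · exact Set.mem_insert_iff.2 (Or.inr h)
    rcases eq_or_ne (N.src a, (P a x).take n) c with he | hne
    · exact ⟨n, he.symm⟩
    · exfalso
      rcases hc.2.2 _ hseg' hle hne with ⟨p, hp, hnon⟩
      rcases Set.mem_insert_iff.1 hp with rfl | hp
      · exact hnon honx'
      · rw [Set.mem_singleton_iff.1 hp] at hnon
        exact hnon hony'
  obtain ⟨ns, hseq⟩ := claim s hs
  obtain ⟨nt, hteq⟩ := claim t ht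
  have key : ∀ (u v : N.V × List N.A) (nu nv : ℕ), N.IsLCS {P a x, P a y} u →
      N.IsLCS {P a x, P a y} v → u = (N.src a, (P a x).take nu) →
      v = (N.src a, (P a x).take nv) → nu ≤ nv → u ≠ v → False := by
    intro u v nu nv hu hv hueq hveq hle hne
    have hleseg : N.SegLE u v := by
      constructor
      · rw [hueq, hveq]
        show (P a x).take nu <:+: (P a x).take nv
        have : (P a x).take nu = ((P a x).take nv).take nu := by
          rw [List.take_take, min_eq_left hle]
        rw [this]
        exact (List.take_prefix _ _).isInfix
      · rw [hueq, hveq]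
        exact Set.mem_insert _ _
    rcases hu.2.2 v hv.1 hleseg (fun h => hne h.symm) with ⟨p, hp, hnon⟩
    exact hnon (hv.2.1 p hp)
  rcases le_total ns nt with h | h
  · exact key s t ns nt hs ht hseq hteq h hst
  · exact key t s nt ns ht hs hteq hseq h (Ne.symm hst)

/-! ### Stability violations -/

lemma stability_violation2 {P : Fin k → Fin k → List N.A} (hP : N.IsStableSystem P)
    {y i₀ i₁ : Fin k} (h01 : i₀ ≠ i₁) {L₀ L₁ : List N.A}
    (hp0 : N.IsPathFrom (N.src i₀) (N.snk y) L₀)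
    (hp1 : N.IsPathFrom (N.src i₁) (N.snk y) L₁)
    (hd01 : ∀ e, e ∈ L₀ → e ∉ L₁)
    (hd0 : ∀ c, c ≠ i₀ → c ≠ i₁ → ∀ e, e ∈ L₀ → e ∉ P c y)
    (hd1 : ∀ c, c ≠ i₀ → c ≠ i₁ → ∀ e, e ∈ L₁ → e ∉ P c y) :
    L₀ = P i₀ y ∧ L₁ = P i₁ y := by
  classical
  set Q : Fin k → List N.A := fun c => if c = i₀ then L₀ else if c = i₁ then L₁ else P c y
    with hQ
  have hQ0 : Q i₀ = L₀ := by simp [hQ]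
  have hQ1 : Q i₁ = L₁ := by simp [hQ, Ne.symm h01]
  have hQO : ∀ c, c ≠ i₀ → c ≠ i₁ → Q c = P c y := by
    intro c h1 h2; simp [hQ, h1, h2]
  have fam := hP.1.2 y
  have hpaths : ∀ i, N.IsPathFrom (N.src i) (N.snk y) (Q i) := by
    intro i
    rcases eq_or_ne i i₀ with h | h
    · rw [h, hQ0]; exact hp0
    · rcases eq_or_ne i i₁ with h' | h'
      · rw [h', hQ1]; exact hp1
      · rw [hQO i h h']; exact hP.1.1 i y
  have hdisj : ∀ i i', i ≠ i' → ∀ e : N.A, e ∈ Q i → e ∉ Q i' := by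
    intro i i' hii' e he he'
    rcases eq_or_ne i i₀ with h | h
    · rw [h, hQ0] at he
      rcases eq_or_ne i' i₁ with h' | h'
      · rw [h', hQ1] at he'
        exact hd01 e he he'
      · have h'' : i' ≠ i₀ := by rw [h] at hii'; exact Ne.symm hii'
        rw [hQO i' h'' h'] at he'
        exact hd0 i' h'' h' e he he'
    · rcases eq_or_ne i i₁ with h2 | h2
      · rw [h2, hQ1] at he
        rcases eq_or_ne i' i₀ with h' | h'
        · rw [h', hQ0] at he'
          exact hd01 e he' he
        · have h'' : i' ≠ i₁ := by rw [h2] at hii'; exact Ne.symm hii'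
          rw [hQO i' h' h''] at he'
          exact hd1 i' h' h'' e he he'
      · rw [hQO i h h2] at he
        rcases eq_or_ne i' i₀ with h' | h'
        · rw [h', hQ0] at he'
          exact hd0 i h h2 e he' he
        · rcases eq_or_ne i' i₁ with h'' | h'' 
          · rw [h'', hQ1] at he'
            exact hd1 i h h2 e he' he
          · rw [hQO i' h' h''] at he'
            exact fam i i' hii' e he he'
  have h0 := hP.2 y Q hpaths hdisj i₀
  have h1 := hP.2 y Q hpaths hdisj i₁
  rw [hQ0] at h0
  rw [hQ1] at h1
  exact ⟨h0, h1⟩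

lemma stability_violation1 {P : Fin k → Fin k → List N.A} (hP : N.IsStableSystem P)
    {y i₀ : Fin k} (i₁ : Fin k) (h01 : i₀ ≠ i₁) {L₀ : List N.A}
    (hp0 : N.IsPathFrom (N.src i₀) (N.snk y) L₀)
    (hd : ∀ c, c ≠ i₀ → ∀ e, e ∈ L₀ → e ∉ P c y) :
    L₀ = P i₀ y := by
  have fam := hP.1.2 y
  refine (stability_violation2 hP h01 hp0 (hP.1.1 i₁ y) ?_ ?_ ?_).1
  · intro e he
    exact hd i₁ (Ne.symm h01) e he
  · intro c h1 h2 e he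
    exact hd c h1 e he
  · intro c h1 h2 e he
    exact fam i₁ c (Ne.symm h2) e he

lemma splice_force {P : Fin k → Fin k → List N.A} (hP : N.IsStableSystem P)
    {x y z a a' : Fin k} (haa' : a ≠ a') (haz : a ≠ z) (ha'z : a' ≠ z)
    (htri : ∀ c : Fin k, c = a ∨ c = a' ∨ c = z)
    (hcards : N.lcsCount P x y (P z y) = 1)
    {n m : ℕ} {v : N.V} (hcn : N.CutAt (P a x) n v) (hcm : N.CutAt (P a y) m v)
    (hne : (P a x).take n ≠ (P a y).take m) :
    ∃ f, f ∈ (P a x).take n ∧ f ∈ P a' y := by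
  by_contra hno
  push_neg at hno
  have hpax := hP.1.1 a x
  have hpay := hP.1.1 a y
  have fam := hP.1.2 y
  have hp0 : N.IsPathFrom (N.src a) (N.snk y) ((P a x).take n ++ (P a y).drop m) :=
    splice_isPathFrom hpax hpay hcn hcm (src_ne_end hpay a)
  have heq : (P a x).take n ++ (P a y).drop m = P a y := by
    refine stability_violation1 hP a' haa' hp0 ?_
    intro c hc e he hec
    rcases htri c with h | h | h
    · exact hc h
    · rcases List.mem_append.1 he with h1 | h1
      · rw [h] at hec
        exact hno e h1 hec
      · rw [h] at hec
        exact fam a a' haa' e ((List.drop_sublist _ _).subset h1) hec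
    · rcases List.mem_append.1 he with h1 | h1
      · rw [h] at hec
        exact lcs_disjoint hP.1 hcards haz
          (tail_mem_pathVerts ((List.take_sublist _ _).subset h1)) (tail_mem_pathVerts hec)
      · rw [h] at hec
        exact fam a z haz e ((List.drop_sublist _ _).subset h1) hec
  have heq2 : (P a x).take n ++ (P a y).drop m = (P a y).take m ++ (P a y).drop m :=
    heq.trans (List.take_append_drop _ _).symm
  exact hne (List.append_cancel_right heq2)

lemma exists_crossing {P : Fin k → Fin k → List N.A} (hP : N.IsStableSystem P)
    {x y z a a' : Fin k} (hxy : x ≠ y) (haa' : a ≠ a') (haz : a ≠ z) (ha'z : a' ≠ z)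
    (htri : ∀ c : Fin k, c = a ∨ c = a' ∨ c = z)
    (hcards : N.lcsCount P x y (P z y) = 1)
    (hcarda : N.lcsCount P x y (P a x) ≠ 1) :
    ∃ v, v ∈ N.pathVerts (P a x) ∧ v ∈ N.pathVerts (P a' y) := by
  have hpax := hP.1.1 a x
  have hpay := hP.1.1 a y
  rcases exists_lcs (N.src a, []) (single_vertex_seg _)
      (segOn_single (start_mem_pathVerts hpax)) (segOn_single (start_mem_pathVerts hpay))
    with ⟨σ, hσ, _⟩
  have hσmem : σ ∈ {s : N.V × List N.A | N.IsPairLCSOn P x y (P a x) s} :=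
    ⟨⟨a, a, hσ⟩, hσ.2.1 _ (mem_pair_left _ _)⟩
  rcases card_ne_one_second hcarda hσmem with ⟨r, hrmem, hrne⟩
  rcases classify_lcs hP hxy haz haa' htri hcards hrmem with hcross | hrlcs
  · exact hcross
  rcases two_lcs_diverge hpax hpay hσ hrlcs (fun h => hrne h.symm) with ⟨n, m, v, hcn, hcm, hne⟩
  rcases splice_force hP haa' haz ha'z htri hcards hcn hcm hne with ⟨f, hf1, hf2⟩
  exact ⟨N.tail f, tail_mem_pathVerts ((List.take_sublist _ _).subset hf1),
    tail_mem_pathVerts hf2⟩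

/-! ### No double crossing, and the key lemma -/

lemma cut_mem {p : List N.A} (hp : p ≠ []) {n : ℕ} {v : N.V} (h : N.CutAt p n v) :
    v ∈ N.pathVerts p := by
  have hlen : 0 < p.length := List.length_pos_iff.2 hp
  rcases Nat.lt_or_ge n p.length with hlt | hge
  · rw [← cut_tail_eq h hlt]
    exact tail_mem_pathVerts (List.get_mem _ _)
  · have hn : n = p.length := le_antisymm h.1 hge
    have h1 : n - 1 < p.length := by omega
    rw [← cut_head_eq h (by omega) h1]
    exact head_mem_pathVerts (List.get_mem _ _)

lemma no_double_crossing {P : Fin k → Fin k → List N.A} (hP : N.IsStableSystem P)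
    {x y z : Fin k} (hxy : x ≠ y) (hxz : x ≠ z) (hyz : y ≠ z)
    (htri : ∀ c : Fin k, c = x ∨ c = y ∨ c = z)
    (hBz : N.lcsCount P x y (P z y) = 1) :
    ∀ (NN n₁ k₁ n₂ k₂ : ℕ) (v₁ v₂ : N.V), n₁ + n₂ ≤ NN →
      N.CutAt (P x x) n₁ v₁ → N.CutAt (P y y) k₁ v₁ →
      N.CutAt (P y x) n₂ v₂ → N.CutAt (P x y) k₂ v₂ → False := by
  intro NN
  induction NN using Nat.strong_induction_on with
  | _ NN ih =>
  intro n₁ k₁ n₂ k₂ v₁ v₂ hsum hc1 hc2 hc3 hc4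
  have hpxx := hP.1.1 x x
  have hpyy := hP.1.1 y y
  have hpyx := hP.1.1 y x
  have hpxy := hP.1.1 x y
  have fam_x := hP.1.2 x
  have fam_y := hP.1.2 y
  have hv1y : v₁ ≠ N.snk y := by
    intro h
    have := snk_eq_end hpxx (h ▸ cut_mem hpxx.1 hc1)
    exact hxy (N.snk_inj this).symm
  have hv2y : v₂ ≠ N.snk y := by
    intro h
    have := snk_eq_end hpyx (h ▸ cut_mem hpyx.1 hc3)
    exact hxy (N.snk_inj this).symm
  have hk1lt : k₁ < (P y y).length := cut_lt_of_ne_end hpyy hc2 hv1y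
  have hk2lt : k₂ < (P x y).length := cut_lt_of_ne_end hpxy hc4 hv2y
  by_cases hc1e : ∃ e, e ∈ (P x x).take n₁ ∧ e ∈ (P x y).drop k₂
  · obtain ⟨e, he1, he2⟩ := hc1e
    obtain ⟨j, hj, hjn, hgetj⟩ := list_mem_take_exists he1
    obtain ⟨j', hj', hj'k, hgetj'⟩ := list_mem_drop_exists he2
    have hcutA : N.CutAt (P x x) j (N.tail e) := by
      have := cut_of_get_tail hpxx.2.1 hj; rw [hgetj] at this; exact this
    have hcutB : N.CutAt (P x y) j' (N.tail e) := by
      have := cut_of_get_tail hpxy.2.1 hj'; rw [hgetj'] at this; exact this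
    by_cases hc1a : ∃ f, f ∈ (P x x).take j ∧ f ∈ P y y
    · obtain ⟨f, hf1, hf2⟩ := hc1a
      obtain ⟨jf, hjf, hjfj, hgetf⟩ := list_mem_take_exists hf1
      have hcutf : N.CutAt (P x x) jf (N.tail f) := by
        have := cut_of_get_tail hpxx.2.1 hjf; rw [hgetf] at this; exact this
      rcases cut_exists hpyy.2.1 (tail_mem_pathVerts hf2) with ⟨kf, hcutkf⟩
      exact ih (jf + n₂) (by omega) jf kf n₂ k₂ _ _ (le_refl _) hcutf hcutkf hc3 hc4
    · push_neg at hc1a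
      have hp0 : N.IsPathFrom (N.src x) (N.snk y) ((P x x).take j ++ (P x y).drop j') :=
        splice_isPathFrom hpxx hpxy hcutA hcutB (src_ne_end hpxy x)
      have heq : (P x x).take j ++ (P x y).drop j' = P x y := by
        refine stability_violation1 hP y hxy hp0 ?_
        intro c hcx e' he' hec
        rcases htri c with h | h | h
        · exact hcx h
        · rw [h] at hec
          rcases List.mem_append.1 he' with h1 | h1
          · exact hc1a e' h1 hec
          · exact fam_y x y hxy e' ((List.drop_sublist _ _).subset h1) hec
        · rw [h] at hec
          rcases List.mem_append.1 he' with h1 | h1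
          · exact lcs_disjoint hP.1 hBz hxz
              (tail_mem_pathVerts ((List.take_sublist _ _).subset h1)) (tail_mem_pathVerts hec)
          · exact fam_y x z hxz e' ((List.drop_sublist _ _).subset h1) hec
      have htakes : (P x x).take j = (P x y).take j' :=
        List.append_cancel_right (heq.trans (List.take_append_drop _ _).symm)
      have hv2A : v₂ ∈ N.pathVerts (P x x) := by
        have hv2 : v₂ = N.tail ((P x y).get ⟨k₂, hk2lt⟩) := (cut_tail_eq hc4 hk2lt).symm
        rcases Nat.lt_or_ge k₂ j' with hlt | hge
        · have hmem : (P x y).get ⟨k₂, hk2lt⟩ ∈ (P x y).take j' := list_get_mem_take hk2lt hlt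
          rw [← htakes] at hmem
          rw [hv2]
          exact tail_mem_pathVerts ((List.take_sublist _ _).subset hmem)
        · have hkj : k₂ = j' := le_antisymm (by omega) hge
          have hgeteq : (P x y).get ⟨k₂, hk2lt⟩ = e := by
            rw [← hgetj']
            congr 1
            simp only [Fin.mk.injEq]
            omega
          rw [hv2, hgeteq]
          exact tail_mem_pathVerts ((List.take_sublist _ _).subset he1)
      have hsnk := stable_vertex_disjoint hP (Ne.symm hxy) (cut_mem hpyx.1 hc3) hv2A
      have := snk_eq_end hpxy (hsnk ▸ cut_mem hpxy.1 hc4)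
      exact hxy (N.snk_inj this)
  · by_cases hc2e : ∃ e, e ∈ (P y x).take n₂ ∧ e ∈ (P y y).drop k₁
    · obtain ⟨e, he1, he2⟩ := hc2e
      obtain ⟨j, hj, hjn, hgetj⟩ := list_mem_take_exists he1
      obtain ⟨j', hj', hj'k, hgetj'⟩ := list_mem_drop_exists he2
      have hcutA : N.CutAt (P y x) j (N.tail e) := by
        have := cut_of_get_tail hpyx.2.1 hj; rw [hgetj] at this; exact this
      have hcutB : N.CutAt (P y y) j' (N.tail e) := by
        have := cut_of_get_tail hpyy.2.1 hj'; rw [hgetj'] at this; exact this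
      by_cases hc2a : ∃ f, f ∈ (P y x).take j ∧ f ∈ P x y
      · obtain ⟨f, hf1, hf2⟩ := hc2a
        obtain ⟨jf, hjf, hjfj, hgetf⟩ := list_mem_take_exists hf1
        have hcutf : N.CutAt (P y x) jf (N.tail f) := by
          have := cut_of_get_tail hpyx.2.1 hjf; rw [hgetf] at this; exact this
        rcases cut_exists hpxy.2.1 (tail_mem_pathVerts hf2) with ⟨kf, hcutkf⟩
        exact ih (n₁ + jf) (by omega) n₁ k₁ jf kf _ _ (le_refl _) hc1 hc2 hcutf hcutkf
      · push_neg at hc2a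
        have hp0 : N.IsPathFrom (N.src y) (N.snk y) ((P y x).take j ++ (P y y).drop j') :=
          splice_isPathFrom hpyx hpyy hcutA hcutB (src_ne_end hpyy y)
        have heq : (P y x).take j ++ (P y y).drop j' = P y y := by
          refine stability_violation1 hP x (Ne.symm hxy) hp0 ?_
          intro c hcy e' he' hec
          rcases htri c with h | h | h
          · rw [h] at hec
            rcases List.mem_append.1 he' with h1 | h1
            · exact hc2a e' h1 hec
            · exact fam_y y x (Ne.symm hxy) e' ((List.drop_sublist _ _).subset h1) hec
          · exact hcy h
          · rw [h] at hec
            rcases List.mem_append.1 he' with h1 | h1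
            · exact lcs_disjoint hP.1 hBz hyz
                (tail_mem_pathVerts ((List.take_sublist _ _).subset h1)) (tail_mem_pathVerts hec)
            · exact fam_y y z hyz e' ((List.drop_sublist _ _).subset h1) hec
        have htakes : (P y x).take j = (P y y).take j' :=
          List.append_cancel_right (heq.trans (List.take_append_drop _ _).symm)
        have hv1A : v₁ ∈ N.pathVerts (P y x) := by
          have hv1 : v₁ = N.tail ((P y y).get ⟨k₁, hk1lt⟩) := (cut_tail_eq hc2 hk1lt).symm
          rcases Nat.lt_or_ge k₁ j' with hlt | hge
          · have hmem : (P y y).get ⟨k₁, hk1lt⟩ ∈ (P y y).take j' := list_get_mem_take hk1lt hlt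
            rw [← htakes] at hmem
            rw [hv1]
            exact tail_mem_pathVerts ((List.take_sublist _ _).subset hmem)
          · have hkj : k₁ = j' := le_antisymm (by omega) hge
            have hgeteq : (P y y).get ⟨k₁, hk1lt⟩ = e := by
              rw [← hgetj']
              congr 1
              simp only [Fin.mk.injEq]
              omega
            rw [hv1, hgeteq]
            exact tail_mem_pathVerts ((List.take_sublist _ _).subset he1)
        have hsnk := stable_vertex_disjoint hP hxy (cut_mem hpxx.1 hc1) hv1A
        have := snk_eq_end hpyy (hsnk ▸ cut_mem hpyy.1 hc2)
        exact hxy (N.snk_inj this)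
    · push_neg at hc1e hc2e
      have hQx : N.IsPathFrom (N.src x) (N.snk y) ((P x x).take n₁ ++ (P y y).drop k₁) :=
        splice_isPathFrom hpxx hpyy hc1 hc2 (src_ne_end hpyy x)
      have hQy : N.IsPathFrom (N.src y) (N.snk y) ((P y x).take n₂ ++ (P x y).drop k₂) :=
        splice_isPathFrom hpyx hpxy hc3 hc4 (src_ne_end hpxy y)
      have hd01 : ∀ e, e ∈ (P x x).take n₁ ++ (P y y).drop k₁ →
          e ∉ (P y x).take n₂ ++ (P x y).drop k₂ := by
        intro e he he'
        rcases List.mem_append.1 he with h1 | h1 <;> rcases List.mem_append.1 he' with h2 | h2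
        · exact fam_x x y hxy e ((List.take_sublist _ _).subset h1)
            ((List.take_sublist _ _).subset h2)
        · exact hc1e e h1 h2
        · exact hc2e e h2 h1
        · exact fam_y y x (Ne.symm hxy) e ((List.drop_sublist _ _).subset h1)
            ((List.drop_sublist _ _).subset h2)
      have hd0 : ∀ c, c ≠ x → c ≠ y → ∀ e, e ∈ (P x x).take n₁ ++ (P y y).drop k₁ →
          e ∉ P c y := by
        intro c hcx hcy e he hec
        rcases htri c with h | h | h
        · exact hcx h
        · exact hcy h
        · rw [h] at hec
          rcases List.mem_append.1 he with h1 | h1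
          · exact lcs_disjoint hP.1 hBz hxz
              (tail_mem_pathVerts ((List.take_sublist _ _).subset h1)) (tail_mem_pathVerts hec)
          · exact fam_y y z hyz e ((List.drop_sublist _ _).subset h1) hec
      have hd1 : ∀ c, c ≠ x → c ≠ y → ∀ e, e ∈ (P y x).take n₂ ++ (P x y).drop k₂ →
          e ∉ P c y := by
        intro c hcx hcy e he hec
        rcases htri c with h | h | h
        · exact hcx h
        · exact hcy h
        · rw [h] at hec
          rcases List.mem_append.1 he with h1 | h1
          · exact lcs_disjoint hP.1 hBz hyz
              (tail_mem_pathVerts ((List.take_sublist _ _).subset h1)) (tail_mem_pathVerts hec)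
          · exact fam_y x z hxz e ((List.drop_sublist _ _).subset h1) hec
      have heqs := stability_violation2 hP hxy hQx hQy hd01 hd0 hd1
      have hg : (P y y).get ⟨k₁, hk1lt⟩ ∈ (P y y).drop k₁ := mem_drop_head hk1lt
      have hgQ : (P y y).get ⟨k₁, hk1lt⟩ ∈ P x y := by
        rw [← heqs.1]
        exact List.mem_append.2 (Or.inr hg)
      exact fam_y y x (Ne.symm hxy) _ (List.get_mem _ _) hgQ

lemma fin3_cover : ∀ (x y z c : Fin 3), x ≠ y → x ≠ z → y ≠ z → (c = x ∨ c = y ∨ c = z) := by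
  decide

end KPairNetwork


namespace KPairNetwork

variable {k : ℕ} (N : KPairNetwork k)

lemma isPairLCSOn_comm (P : Fin k → Fin k → List N.A) (a b : Fin k)
    (p : List N.A) (s : N.V × List N.A) :
    N.IsPairLCSOn P a b p s ↔ N.IsPairLCSOn P b a p s := by
  unfold IsPairLCSOn
  constructor
  · rintro ⟨⟨x, y, hxy⟩, hon⟩
    exact ⟨⟨y, x, by rwa [Set.pair_comm]⟩, hon⟩
  · rintro ⟨⟨x, y, hxy⟩, hon⟩
    exact ⟨⟨y, x, by rwa [Set.pair_comm]⟩, hon⟩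

lemma lcsCount_comm (P : Fin k → Fin k → List N.A) (a b : Fin k)
    (p : List N.A) : N.lcsCount P a b p = N.lcsCount P b a p := by
  unfold lcsCount
  have : {s : N.V × List N.A | N.IsPairLCSOn P a b p s}
      = {s : N.V × List N.A | N.IsPairLCSOn P b a p s} := by
    ext s; exact N.isPairLCSOn_comm P a b p s
  rw [this]

lemma mset_comm (P : Fin k → Fin k → List N.A) (a b c : Fin k) :
    N.mset P a b c = N.mset P b a c := by
  unfold mset
  ext x
  simp only [Set.mem_setOf_eq, N.lcsCount_comm P a b]

/-- Key lemma: in a stable system, it is impossible that both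
`m_{x,y}^x = {z}` and `m_{x,y}^y = {z}`. -/
lemma keyK (N : KPairNetwork 3) (P : Fin 3 → Fin 3 → List N.A)
    (hP : N.IsStableSystem P) (x y z : Fin 3)
    (hxy : x ≠ y) (hxz : x ≠ z) (hyz : y ≠ z) :
    ¬ (N.mset P x y x = {z} ∧ N.mset P x y y = {z}) := by
  rintro ⟨h1, h2⟩
  have hBz : N.lcsCount P x y (P z y) = 1 := by
    have hz : z ∈ N.mset P x y y := by rw [h2]; exact rfl
    exact hz
  have hAx : N.lcsCount P x y (P x x) ≠ 1 := by
    intro h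
    have hx : x ∈ N.mset P x y x := h
    rw [h1] at hx
    exact hxz (Set.mem_singleton_iff.1 hx)
  have hAy : N.lcsCount P x y (P y x) ≠ 1 := by
    intro h
    have hy : y ∈ N.mset P x y x := h
    rw [h1] at hy
    exact hyz (Set.mem_singleton_iff.1 hy)
  have htri : ∀ c : Fin 3, c = x ∨ c = y ∨ c = z := fun c => fin3_cover x y z c hxy hxz hyz
  have htri' : ∀ c : Fin 3, c = y ∨ c = x ∨ c = z := by
    intro c
    rcases htri c with h | h | h
    · exact Or.inr (Or.inl h)
    · exact Or.inl h
    · exact Or.inr (Or.inr h)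
  obtain ⟨v₁, hv₁x, hv₁y⟩ := exists_crossing hP hxy hxy hxz hyz htri hBz hAx
  obtain ⟨v₂, hv₂x, hv₂y⟩ := exists_crossing hP hxy (Ne.symm hxy) hyz hxz htri' hBz hAy
  obtain ⟨n₁, hc1⟩ := cut_exists (hP.1.1 x x).2.1 hv₁x
  obtain ⟨k₁, hc2⟩ := cut_exists (hP.1.1 y y).2.1 hv₁y
  obtain ⟨n₂, hc3⟩ := cut_exists (hP.1.1 y x).2.1 hv₂x
  obtain ⟨k₂, hc4⟩ := cut_exists (hP.1.1 x y).2.1 hv₂y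
  exact no_double_crossing hP hxy hxz hyz htri hBz (n₁ + n₂) n₁ k₁ n₂ k₂ v₁ v₂ (le_refl _)
    hc1 hc2 hc3 hc4


end KPairNetwork

/-- beginning of Case 2 of the proof of the main theorem:
in a stable 3-pair network such that for all pairwise distinct `i, j, l`
either `m_{i,j}^i = {l}` or `m_{i,l}^i = {j}`, if `m_{i,j}^i = {l}` for some
pairwise distinct `i, j, l`, then `l ∈ m_{i,j}^i`, `j ∈ m_{i,l}^l` and
`i ∈ m_{j,l}^j`. -/
theorem statement16 (N : KPairNetwork 3) (P : Fin 3 → Fin 3 → List N.A)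
    (hP : N.IsStableSystem P)
    (hyp : ∀ i j l : Fin 3, i ≠ j → i ≠ l → j ≠ l →
      N.mset P i j i = {l} ∨ N.mset P i l i = {j})
    (i j l : Fin 3) (hij : i ≠ j) (hil : i ≠ l) (hjl : j ≠ l)
    (h : N.mset P i j i = {l}) :
    l ∈ N.mset P i j i ∧ j ∈ N.mset P i l l ∧ i ∈ N.mset P j l j := by
  
  refine ⟨h ▸ rfl, ?_, ?_⟩
  · -- j ∈ mset P i l l
    rcases hyp l i j hil.symm hjl.symm hij with h2 | h2
    · rw [N.mset_comm P i l l, h2]; rfl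
    · exfalso
      rcases hyp j i l hij.symm hjl hil with h3 | h3
      · exact N.keyK P hP i j l hij hil hjl ⟨h, by rw [N.mset_comm P j i j] at h3; exact h3⟩
      · refine N.keyK P hP j l i hjl hij.symm hil.symm ⟨h3, ?_⟩
        rw [N.mset_comm P j l l]; exact h2
  · -- i ∈ mset P j l j
    rcases hyp j i l hij.symm hjl hil with h3 | h3
    · exact absurd ⟨h, by rw [N.mset_comm P j i j] at h3; exact h3⟩
        (N.keyK P hP i j l hij hil hjl)
    · rw [h3]; rfl
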